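/- arXiv:2511.11544 — 4 statements merged into one kernel-verified Lean document; each statement's English description precedes it below -/
import Mathlib

section
/- Let G be a finite group and H a subgroup of G. Then |Solv(H)| ≤ |Solv(G)|, where Solv(H) is computed with solvabilizers taken inside the group H. -/
/-- The solvabilizer of an element `x` of a group `G`:
the set of `y ∈ G` such that `⟨x, y⟩` is solvable. -/
def solvabilizer {G : Type*} [Group G] (x : G) : Set G :=
  {y | IsSolvable ↥(Subgroup.closure {x, y})}

/-- `Solv(G)`, the set of distinct solvabilizers of elements of `G`. -/
def solvSet (G : Type*) [Group G] : Set (Set G) :=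
  Set.range fun x : G => solvabilizer x

lemma solvabilizer_subgroup_eq {G : Type*} [Group G] (H : Subgroup G) (x : H) :
    solvabilizer x = Subtype.val ⁻¹' solvabilizer (x : G) := by
  ext y
  have hmap : (Subgroup.closure {x, y}).map H.subtype =
      Subgroup.closure {(x : G), (y : G)} := by
    rw [MonoidHom.map_closure]
    congr 1
    simp [Set.image_insert_eq]
  have e : ↥(Subgroup.closure {x, y}) ≃* ↥(Subgroup.closure {(x : G), (y : G)}) := by
    rw [← hmap]
    exact Subgroup.equivMapOfInjective _ _ H.subtype_injective
  simp only [solvabilizer, Set.mem_setOf_eq, Set.mem_preimage]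
  constructor
  · intro h
    haveI := h; exact @solvable_of_surjective _ _ _ _ e.toMonoidHom e.surjective h
  · intro h
    haveI := h; exact @solvable_of_surjective _ _ _ _ e.symm.toMonoidHom e.symm.surjective h

/-- If `H` is a subgroup of a finite group `G`, then `|Solv(H)| ≤ |Solv(G)|`,
where `Solv(H)` is computed with solvabilizers taken inside the group `H`. -/
theorem solvSet_ncard_le_of_subgroup {G : Type*} [Group G] [Finite G] (H : Subgroup G) :
    (solvSet ↥H).ncard ≤ (solvSet G).ncard := by
  have hsub : solvSet ↥H ⊆ (fun S : Set G => Subtype.val ⁻¹' S) ''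
      (Set.range fun x : H => solvabilizer (x : G)) := by
    rintro S ⟨x, rfl⟩
    exact ⟨solvabilizer (x : G), ⟨x, rfl⟩, (solvabilizer_subgroup_eq H x).symm⟩
  have hrange : (Set.range fun x : H => solvabilizer (x : G)) ⊆ solvSet G := by
    rintro S ⟨x, rfl⟩
    exact ⟨(x : G), rfl⟩
  calc (solvSet ↥H).ncard
      ≤ ((fun S : Set G => Subtype.val ⁻¹' S) ''
          (Set.range fun x : H => solvabilizer (x : G))).ncard :=
        Set.ncard_le_ncard hsub (Set.toFinite _)
    _ ≤ (Set.range fun x : H => solvabilizer (x : G)).ncard :=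
        Set.ncard_image_le (Set.toFinite _)
    _ ≤ (solvSet G).ncard := Set.ncard_le_ncard hrange (Set.toFinite _)
end

section
/- Let G be a finite group and let N be the solvable radical of G, i.e., N is a normal solvable subgroup of G containing every normal solvable subgroup of G. If N ≠ 1, then |Solv(G)| = |Solv(G/N)|. -/
lemma map_closure_pair {G H : Type*} [Group G] [Group H] (f : G →* H) (x y : G) :
    Subgroup.map f (Subgroup.closure {x, y}) = Subgroup.closure {f x, f y} := by
  rw [MonoidHom.map_closure, Set.image_pair]

lemma solvable_closure_iff {G : Type*} [Group G] (N : Subgroup G) [N.Normal]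
    (hNsolv : IsSolvable ↥N) (x y : G) :
    IsSolvable ↥(Subgroup.closure {x, y}) ↔
      IsSolvable ↥(Subgroup.closure {((x : G ⧸ N)), (y : G ⧸ N)}) := by
  set H := Subgroup.closure {x, y}
  have hmap : Subgroup.map (QuotientGroup.mk' N) H
      = Subgroup.closure {((x : G ⧸ N)), (y : G ⧸ N)} :=
    map_closure_pair (QuotientGroup.mk' N) x y
  have hr : ((QuotientGroup.mk' N).comp H.subtype).range
      = Subgroup.map (QuotientGroup.mk' N) H := by
    rw [MonoidHom.range_eq_map, ← Subgroup.map_map, ← MonoidHom.range_eq_map,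
      Subgroup.range_subtype]
  set f : ↥H →* G ⧸ N := (QuotientGroup.mk' N).comp H.subtype with hf
  constructor
  · intro h
    rw [← hmap, ← hr]
    haveI : Group.IsSolvable ↥H := h
    exact solvable_of_surjective f.rangeRestrict_surjective
  · intro h
    have hker : IsSolvable ↥f.ker := by
      haveI : Group.IsSolvable ↥N := hNsolv
      exact solvable_of_solvable_injective
        (f := (MonoidHom.mk' (fun g : ↥f.ker => (⟨((g : ↥H) : G),
          (QuotientGroup.eq_one_iff _).mp g.2⟩ : ↥N))
          (fun a b => rfl))) (fun a b hab => by
            have h1 : ((a : ↥H) : G) = ((b : ↥H) : G) := congrArg (fun z : ↥N => (z : G)) hab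
            ext
            exact h1)
    have hrange : IsSolvable ↥f.range := by
      rw [hr, hmap]; exact h
    haveI : Group.IsSolvable ↥f.ker := hker
    haveI : Group.IsSolvable ↥f.range := hrange
    exact solvable_of_ker_le_range f.ker.subtype f.rangeRestrict
      (by rw [MonoidHom.ker_rangeRestrict, Subgroup.range_subtype])

/-- Let `N` be the solvable radical of a finite group `G` (a normal solvable subgroup
containing every normal solvable subgroup). If `N ≠ 1`, then `|Solv(G)| = |Solv(G/N)|`. -/
theorem solvSet_ncard_quotient_solvableRadical {G : Type*} [Group G] [Finite G]
    (N : Subgroup G) [N.Normal] (hNsolv : IsSolvable ↥N)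
    (hNmax : ∀ M : Subgroup G, M.Normal → IsSolvable ↥M → M ≤ N)
    (hN : N ≠ ⊥) :
    (solvSet G).ncard = (solvSet (G ⧸ N)).ncard := by
  have hpre : ∀ x : G, solvabilizer x
      = (QuotientGroup.mk : G → G ⧸ N) ⁻¹' solvabilizer (x : G ⧸ N) := by
    intro x
    ext y
    exact solvable_closure_iff N hNsolv x y
  have hsurj : Function.Surjective (QuotientGroup.mk : G → G ⧸ N) :=
    QuotientGroup.mk_surjective
  have himg : solvSet G = ((QuotientGroup.mk : G → G ⧸ N) ⁻¹' ·) '' solvSet (G ⧸ N) := by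
    ext S
    constructor
    · rintro ⟨x, rfl⟩
      exact ⟨solvabilizer (x : G ⧸ N), ⟨(x : G ⧸ N), rfl⟩, (hpre x).symm⟩
    · rintro ⟨T, ⟨z, rfl⟩, rfl⟩
      obtain ⟨x, rfl⟩ := hsurj z
      exact ⟨x, hpre x⟩
  rw [himg, Set.ncard_image_of_injective _ (Set.preimage_injective.mpr hsurj)]
end

section
/- For any finite nonsolvable group G, there exists a finite non-abelian simple group H with |Solv(H)| ≤ |Solv(G)|. -/
-- auxiliary lemmas
lemma isSolvable_congr {A B : Type*} [Group A] [Group B] (e : A ≃* B) :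
    IsSolvable A ↔ IsSolvable B :=
  ⟨fun h => by haveI : Group.IsSolvable A := h; exact solvable_of_surjective (f := e.toMonoidHom) e.surjective,
   fun h => by haveI : Group.IsSolvable B := h; exact solvable_of_surjective (f := e.symm.toMonoidHom) e.symm.surjective⟩

lemma solvabilizer_subtype {G : Type*} [Group G] (K : Subgroup G) (x : K) :
    solvabilizer x = (Subtype.val : K → G) ⁻¹' solvabilizer (x : G) := by
  ext y
  simp only [solvabilizer, Set.mem_setOf_eq, Set.mem_preimage]
  have h1 : Subgroup.closure {(x : G), (y : G)} = (Subgroup.closure {x, y}).map K.subtype := by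
    rw [MonoidHom.map_closure, Set.image_pair]; rfl
  rw [h1]
  exact isSolvable_congr ((Subgroup.closure {x, y}).equivMapOfInjective K.subtype
    K.subtype_injective)

lemma solvSet_subgroup_ncard_le {G : Type*} [Group G] [Finite G] (K : Subgroup G) :
    (solvSet K).ncard ≤ (solvSet G).ncard := by
  have hsub : solvSet ↥K ⊆ (fun S => (Subtype.val : K → G) ⁻¹' S) '' solvSet G := by
    rintro _ ⟨x, rfl⟩
    exact ⟨solvabilizer (x : G), ⟨(x : G), rfl⟩, (solvabilizer_subtype K x).symm⟩
  calc (solvSet ↥K).ncard ≤ _ := Set.ncard_le_ncard hsub (Set.Finite.image _ (Set.toFinite _))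
    _ ≤ (solvSet G).ncard := Set.ncard_image_le (Set.toFinite _)

lemma solvabilizer_mk_preimage {G : Type*} [Group G] (N : Subgroup G) [N.Normal]
    [Group.IsSolvable N] (x : G) :
    (QuotientGroup.mk' N) ⁻¹' solvabilizer (QuotientGroup.mk' N x) = solvabilizer x := by
  ext y
  simp only [solvabilizer, Set.mem_setOf_eq, Set.mem_preimage]
  set π := QuotientGroup.mk' N with hπ
  set H := Subgroup.closure {x, y} with hH
  have h1 : Subgroup.closure {π x, π y} = H.map π := by
    rw [MonoidHom.map_closure, Set.image_pair]
  rw [h1]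
  set g := π.comp H.subtype with hg
  have hr : g.range = H.map π := by
    rw [hg, MonoidHom.range_comp, Subgroup.range_subtype]
  have hker : g.ker = N.subgroupOf H := by
    rw [hg, ← MonoidHom.comap_ker, QuotientGroup.ker_mk']; rfl
  have hsolvN : IsSolvable ↥(N.subgroupOf H) := by
    rw [← Subgroup.inf_subgroupOf_right]
    have e1 := Subgroup.subgroupOfEquivOfLe (inf_le_right : N ⊓ H ≤ H)
    have e2 := Subgroup.subgroupOfEquivOfLe (inf_le_left : N ⊓ H ≤ N)
    exact (isSolvable_congr e1).mpr ((isSolvable_congr e2).mp (inferInstance : Group.IsSolvable _))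
  constructor
  · intro hq
    haveI : Group.IsSolvable ↥(N.subgroupOf H) := hsolvN
    haveI : Group.IsSolvable ↥g.range := by rw [hr]; exact hq
    exact solvable_of_ker_le_range (N.subgroupOf H).subtype g.rangeRestrict
      (by rw [MonoidHom.ker_rangeRestrict, hker, Subgroup.range_subtype])
  · intro hH2
    haveI : Group.IsSolvable ↥H := hH2
    have h3 : IsSolvable ↥g.range := solvable_of_surjective g.rangeRestrict_surjective
    rwa [hr] at h3

lemma solvSet_quotient_ncard_le {G : Type*} [Group G] [Finite G] (N : Subgroup G)
    [N.Normal] [Group.IsSolvable N] :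
    (solvSet (G ⧸ N)).ncard ≤ (solvSet G).ncard := by
  have hsub : (fun S => (QuotientGroup.mk' N) ⁻¹' S) '' solvSet (G ⧸ N) ⊆ solvSet G := by
    rintro _ ⟨_, ⟨xb, rfl⟩, rfl⟩
    obtain ⟨x, rfl⟩ := QuotientGroup.mk'_surjective N xb
    exact ⟨x, (solvabilizer_mk_preimage N x).symm⟩
  have hinj : Function.Injective (fun S => (QuotientGroup.mk' N) ⁻¹' S : Set (G ⧸ N) → Set G) :=
    Set.preimage_injective.mpr (QuotientGroup.mk'_surjective N)
  calc (solvSet (G ⧸ N)).ncard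
      = ((fun S => (QuotientGroup.mk' N) ⁻¹' S) '' solvSet (G ⧸ N)).ncard :=
        (Set.ncard_image_of_injective _ hinj).symm
    _ ≤ (solvSet G).ncard := Set.ncard_le_ncard hsub (Set.toFinite _)


/-- A non-abelian simple group: a simple group that is not commutative. -/
def IsNonabelianSimple (H : Type*) [Group H] : Prop :=
  IsSimpleGroup H ∧ ¬ ∀ a b : H, a * b = b * a

theorem aux_main : ∀ (n : ℕ) (G : Type u) (instG : Group G) (instF : Finite G),
    Nat.card G = n → ¬ IsSolvable G →
    ∃ (H : Type u) (instH : Group H) (_ : Finite H),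
      @IsNonabelianSimple H instH ∧
        (@solvSet H instH).ncard ≤ (@solvSet G instG).ncard := by
  intro n
  induction n using Nat.strong_induction_on with
  | _ n IH =>
    intro G instG instF hcard hG
    by_cases hs : IsSimpleGroup G
    · exact ⟨G, instG, instF, ⟨hs, fun hcomm => hG (isSolvable_of_comm hcomm)⟩, le_rfl⟩
    · haveI : Nontrivial G := by
        rcases subsingleton_or_nontrivial G with h | h
        · exact absurd (isSolvable_of_comm fun a b => Subsingleton.elim _ _) hG
        · exact h
      obtain ⟨N, hN, hbot, htop⟩ :
          ∃ N : Subgroup G, N.Normal ∧ N ≠ ⊥ ∧ N ≠ ⊤ := by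
        by_contra hcon
        push_neg at hcon
        exact hs ⟨fun N hN => or_iff_not_imp_left.mpr (hcon N hN)⟩
      haveI := hN
      have hcardN : 1 < Nat.card ↥N := by
        have h0 : Nat.card ↥N ≠ 0 := Nat.card_pos.ne'
        have h1 : Nat.card ↥N ≠ 1 := fun h => hbot (Subgroup.card_eq_one.mp h)
        omega
      rcases Classical.em (IsSolvable ↥N) with hNs | hNs
      · haveI : Group.IsSolvable ↥N := hNs
        have hGN : ¬ IsSolvable (G ⧸ N) := fun h => by
          haveI : Group.IsSolvable (G ⧸ N) := h
          exact hG (solvable_of_ker_le_range N.subtype (QuotientGroup.mk' N)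
            (by rw [QuotientGroup.ker_mk', Subgroup.range_subtype]))
        have hlt : Nat.card (G ⧸ N) < n := by
          have h0 : 0 < Nat.card (G ⧸ N) := Nat.card_pos
          rw [← hcard, Subgroup.card_eq_card_quotient_mul_card_subgroup N]
          exact (lt_mul_iff_one_lt_right h0).mpr hcardN
        obtain ⟨H, iH, fH, hsimple, hle⟩ :=
          IH (Nat.card (G ⧸ N)) hlt (G ⧸ N) inferInstance inferInstance rfl hGN
        exact ⟨H, iH, fH, hsimple, hle.trans (solvSet_quotient_ncard_le N)⟩
      · have hlt : Nat.card ↥N < n := by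
          rw [← hcard]
          exact lt_of_le_of_ne N.card_le_card_group
            (fun h => htop (Subgroup.eq_top_of_card_eq N h))
        obtain ⟨H, iH, fH, hsimple, hle⟩ :=
          IH (Nat.card ↥N) hlt ↥N inferInstance inferInstance rfl hNs
        exact ⟨H, iH, fH, hsimple, hle.trans (solvSet_subgroup_ncard_le N)⟩

set_option maxHeartbeats 1000000 in
/-- For any finite nonsolvable group `G`, there exists a finite non-abelian simple
group `H` with `|Solv(H)| ≤ |Solv(G)|`. -/
theorem exists_simple_solvSet_ncard_le {G : Type u} [Group G] [Finite G]
    (hG : ¬ IsSolvable G) :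
    ∃ (H : Type u) (instH : Group H) (_ : Finite H),
      @IsNonabelianSimple H instH ∧
        (@solvSet H instH).ncard ≤ (solvSet G).ncard :=
  by
  have := aux_main (Nat.card G) G ‹Group G› ‹Finite G› rfl hG
  exact this
end

section
/- Let G be a finite group and x ∈ G. Then the normalizer of the cyclic subgroup ⟨x⟩ is contained in the normalizer of the set Sol_G(x); that is, if h ∈ G satisfies h⟨x⟩h⁻¹ = ⟨x⟩, then h·Sol_G(x)·h⁻¹ = Sol_G(x). -/
private lemma solvabilizer_conj_subset {G : Type*} [Group G] (x h : G)
    (hh : (fun g => h * g * h⁻¹) '' (Subgroup.zpowers x : Set G) =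
      (Subgroup.zpowers x : Set G)) :
    (fun g => h * g * h⁻¹) '' solvabilizer x ⊆ solvabilizer x := by
  rintro _ ⟨y, hy, rfl⟩
  set f : G →* G := ((MulAut.conj h).toMonoidHom : G →* G) with hf
  have hfapp : ∀ g : G, f g = h * g * h⁻¹ := fun g => rfl
  have hmap : Subgroup.map f (Subgroup.zpowers x) = Subgroup.zpowers x := by
    apply SetLike.coe_injective
    rw [Subgroup.coe_map]
    rw [show (⇑f) = (fun g => h * g * h⁻¹) from funext hfapp]
    exact hh
  have hzp : Subgroup.zpowers (h * x * h⁻¹) = Subgroup.zpowers x := by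
    rw [← hfapp x, ← MonoidHom.map_zpowers, hmap]
  have key : Subgroup.closure {x, h * y * h⁻¹} =
      Subgroup.map f (Subgroup.closure {x, y}) := by
    rw [MonoidHom.map_closure]
    have himg : f '' ({x, y} : Set G) = {h * x * h⁻¹, h * y * h⁻¹} := by
      rw [Set.image_pair, hfapp, hfapp]
    rw [himg, Set.insert_eq, Set.insert_eq, Subgroup.closure_union, Subgroup.closure_union,
      ← Subgroup.zpowers_eq_closure x, ← Subgroup.zpowers_eq_closure (h * x * h⁻¹), hzp]
  have hy' : IsSolvable ↥(Subgroup.closure {x, y}) := hy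
  show IsSolvable ↥(Subgroup.closure {x, h * y * h⁻¹})
  rw [key]
  exact @Group.isSolvable_of_surjective _ _ _ _ _
    (MonoidHom.subgroupMap_surjective f (Subgroup.closure {x, y})) hy'

/-- If `h` normalizes the cyclic subgroup `⟨x⟩`, i.e. `h⟨x⟩h⁻¹ = ⟨x⟩`,
then `h` normalizes the set `Sol_G(x)`, i.e. `h·Sol_G(x)·h⁻¹ = Sol_G(x)`. -/
theorem normalizer_zpowers_le_normalizer_solvabilizer
    {G : Type*} [Group G] [Finite G] (x h : G)
    (hh : (fun g => h * g * h⁻¹) '' (Subgroup.zpowers x : Set G) =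
      (Subgroup.zpowers x : Set G)) :
    (fun g => h * g * h⁻¹) '' solvabilizer x = solvabilizer x := by
  have hh' : (fun g => h⁻¹ * g * h⁻¹⁻¹) '' (Subgroup.zpowers x : Set G) =
      (Subgroup.zpowers x : Set G) := by
    conv_lhs => rw [← hh]
    ext g
    constructor
    · rintro ⟨_, ⟨a, ha, rfl⟩, rfl⟩
      simpa [mul_assoc] using ha
    · intro hg
      exact ⟨h * g * h⁻¹, ⟨g, hg, rfl⟩, by group⟩
  apply Set.Subset.antisymm (solvabilizer_conj_subset x h hh)
  intro y hy
  refine ⟨h⁻¹ * y * h⁻¹⁻¹, solvabilizer_conj_subset x h⁻¹ hh' ⟨y, hy, rfl⟩, by group⟩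
end
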